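/- Let U, V be subspaces of E with dim U ≤ dim V and U ∩ V⊥ = 0 (i.e., V intersects U⊥ transversally). Set T := V ∩ U⊥, W := U + T, and let S := P_V(U) be the image of U under the orthogonal projection onto V. Then S = T⊥ ∩ V, dim U = dim S, dim W = dim V, and δ(W,V) = δ(U,V) = δ(U,S). -/

import Mathlib

open Module Submodule
open scoped RealInnerProductSpace

noncomputable section

variable {E : Type*} [NormedAddCommGroup E] [InnerProductSpace ℝ E] [FiniteDimensional ℝ E]

/-- The orthogonal projection onto a subspace `U`, viewed as a continuous linear
endomorphism of `E`. -/
noncomputable def projCLM (U : Submodule ℝ E) : E →L[ℝ] E :=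
  U.subtypeL.comp (orthogonalProjection U)

/-- The gap `δ(U,V) := ‖P_U - P_V ∘ P_U‖` between two subspaces. -/
noncomputable def gap (U V : Submodule ℝ E) : ℝ :=
  ‖projCLM U - (projCLM V).comp (projCLM U)‖

lemma projCLM_apply (V : Submodule ℝ E) (x : E) :
    projCLM V x = (orthogonalProjection V x : E) := rfl

lemma projCLM_mem (V : Submodule ℝ E) (x : E) : projCLM V x ∈ V :=
  (orthogonalProjection V x).2

lemma projCLM_eq_self (V : Submodule ℝ E) {x : E} (h : x ∈ V) : projCLM V x = x :=
  Submodule.starProjection_eq_self_iff.mpr h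

lemma projCLM_inner (V : Submodule ℝ E) (x y : E) :
    ⟪projCLM V x, y⟫ = ⟪x, projCLM V y⟫ :=
  Submodule.inner_starProjection_left_eq_right V x y

lemma sub_projCLM_mem_orthogonal (V : Submodule ℝ E) (x : E) : x - projCLM V x ∈ Vᗮ :=
  Submodule.sub_starProjection_mem_orthogonal x

/-- Let `U, V` be subspaces with `dim U ≤ dim V` and `U ∩ V⊥ = 0`.  Set `T := V ∩ U⊥`,
`W := U + T`, and let `S := P_V(U)` be the shadow of `U` on `V`.  Then `S = T⊥ ∩ V`,
`dim U = dim S`, `dim W = dim V`, and `δ(W,V) = δ(U,V) = δ(U,S)`. -/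
theorem shadow_properties (U V : Submodule ℝ E)
    (hdim : finrank ℝ U ≤ finrank ℝ V) (htrans : U ⊓ Vᗮ = ⊥) :
    Submodule.map (projCLM V : E →ₗ[ℝ] E) U = (V ⊓ Uᗮ)ᗮ ⊓ V ∧
      finrank ℝ U = finrank ℝ ↥(Submodule.map (projCLM V : E →ₗ[ℝ] E) U) ∧
      finrank ℝ ↥(U ⊔ (V ⊓ Uᗮ)) = finrank ℝ V ∧
      gap (U ⊔ (V ⊓ Uᗮ)) V = gap U V ∧
      gap U V = gap U (Submodule.map (projCLM V : E →ₗ[ℝ] E) U) := by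
  set T : Submodule ℝ E := V ⊓ Uᗮ with hT
  set S : Submodule ℝ E := Submodule.map (projCLM V : E →ₗ[ℝ] E) U with hS
  -- S ≤ V
  have hSV : S ≤ V := by
    rintro _ ⟨u, hu, rfl⟩; exact projCLM_mem V u
  -- S ≤ Tᗮ
  have hSTperp : S ≤ Tᗮ := by
    rintro _ ⟨u, hu, rfl⟩
    rw [Submodule.mem_orthogonal]
    intro t ht
    rw [ContinuousLinearMap.coe_coe, ← projCLM_inner V t u, projCLM_eq_self V ht.1]
    exact (Submodule.mem_orthogonal' _ _).mp ht.2 u hu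
  -- claim 1 : S = Tᗮ ⊓ V
  have h1 : S = Tᗮ ⊓ V := by
    have hle : S ≤ Tᗮ ⊓ V := le_inf hSTperp hSV
    have hsup := Submodule.sup_orthogonal_inf_of_hasOrthogonalProjection hle
    have hbot : Sᗮ ⊓ (Tᗮ ⊓ V) = ⊥ := by
      rw [eq_bot_iff]
      rintro x ⟨hxS, hxT, hxV⟩
      have hxUperp : x ∈ Uᗮ := by
        rw [Submodule.mem_orthogonal]
        intro u hu
        have : ⟪u, projCLM V x⟫ = 0 := by
          rw [← projCLM_inner]
          exact hxS _ (Submodule.mem_map_of_mem hu)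
        rwa [projCLM_eq_self V hxV] at this
      have hxT' : x ∈ T := ⟨hxV, hxUperp⟩
      simpa using (T.inf_orthogonal_eq_bot).le ⟨hxT', hxT⟩
    rw [hbot, sup_bot_eq] at hsup
    exact hsup
  -- claim 2 : finrank U = finrank S
  have h2 : finrank ℝ U = finrank ℝ S := by
    let f : U →ₗ[ℝ] E := (projCLM V : E →ₗ[ℝ] E) ∘ₗ U.subtype
    have hker : LinearMap.ker f = ⊥ := by
      rw [eq_bot_iff]
      rintro x hx
      have hx0 : projCLM V (x : E) = 0 := hx
      have hxperp : (x : E) ∈ Vᗮ :=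
        Submodule.orthogonalProjectionOnto_eq_zero_iff.mp (ZeroMemClass.coe_eq_zero.mp hx0)
      have : (x : E) ∈ U ⊓ Vᗮ := ⟨x.2, hxperp⟩
      rw [htrans] at this
      simpa [Submodule.mem_bot, Submodule.coe_eq_zero] using this
    have hrange : LinearMap.range f = S := by
      rw [hS]
      rw [LinearMap.range_comp, Submodule.range_subtype]
    have := LinearMap.finrank_range_add_finrank_ker f
    rw [hker, finrank_bot, add_zero, hrange] at this
    exact this.symm
  -- dimension of V : finrank V = finrank T + finrank S
  have hTV : T ≤ V := inf_le_left
  have hVTS : finrank ℝ V = finrank ℝ T + finrank ℝ S := by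
    have hsup := Submodule.sup_orthogonal_inf_of_hasOrthogonalProjection hTV
    rw [← h1] at hsup
    have hinf : T ⊓ S = ⊥ := by
      rw [eq_bot_iff]
      intro x hx
      exact (T.inf_orthogonal_eq_bot).le ⟨hx.1, hSTperp hx.2⟩
    have := Submodule.finrank_sup_add_finrank_inf_eq T S
    rw [hsup, hinf, finrank_bot, add_zero] at this
    exact this
  -- claim 3 : finrank (U ⊔ T) = finrank V
  have h3 : finrank ℝ ↥(U ⊔ T) = finrank ℝ V := by
    have hinf : U ⊓ T = ⊥ := by
      rw [eq_bot_iff]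
      intro x hx
      exact (U.inf_orthogonal_eq_bot).le ⟨hx.1, hx.2.2⟩
    have := Submodule.finrank_sup_add_finrank_inf_eq U T
    rw [hinf, finrank_bot, add_zero] at this
    rw [this, hVTS, h2, add_comm]
  -- T ≤ Uᗮ and U ≤ Tᗮ
  have hTUperp : T ≤ Uᗮ := inf_le_right
  have hUTperp : U ≤ Tᗮ :=
    le_trans (Submodule.le_orthogonal_orthogonal U) (Submodule.orthogonal_le hTUperp)
  -- projection onto W = U ⊔ T decomposes
  have hPW : ∀ x : E, projCLM (U ⊔ T) x = projCLM U x + projCLM T x := by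
    intro x
    apply Submodule.eq_starProjection_of_mem_orthogonal
    · exact Submodule.add_mem _ (Submodule.mem_sup_left (projCLM_mem U x))
        (Submodule.mem_sup_right (projCLM_mem T x))
    · rw [Submodule.mem_orthogonal]
      rintro w hw
      rcases Submodule.mem_sup.mp hw with ⟨u, hu, t, ht, rfl⟩
      have huU : ⟪u, x - (projCLM U x + projCLM T x)⟫ = 0 := by
        have hmem : x - (projCLM U x + projCLM T x) ∈ Uᗮ := by
          have h1' : x - projCLM U x ∈ Uᗮ := sub_projCLM_mem_orthogonal U x
          have h2' : projCLM T x ∈ Uᗮ := hTUperp (projCLM_mem T x)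
          have : x - (projCLM U x + projCLM T x) = (x - projCLM U x) - projCLM T x := by abel
          rw [this]
          exact Submodule.sub_mem _ h1' h2'
        exact (Submodule.mem_orthogonal _ _).mp hmem u hu
      have htT : ⟪t, x - (projCLM U x + projCLM T x)⟫ = 0 := by
        have hmem : x - (projCLM U x + projCLM T x) ∈ Tᗮ := by
          have h1' : x - projCLM T x ∈ Tᗮ := sub_projCLM_mem_orthogonal T x
          have h2' : projCLM U x ∈ Tᗮ := hUTperp (projCLM_mem U x)
          have : x - (projCLM U x + projCLM T x) = (x - projCLM T x) - projCLM U x := by abel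
          rw [this]
          exact Submodule.sub_mem _ h1' h2'
        exact (Submodule.mem_orthogonal _ _).mp hmem t ht
      rw [inner_add_left, huU, htT, add_zero]
  -- claim 4 : gap (U ⊔ T) V = gap U V
  have h4 : gap (U ⊔ T) V = gap U V := by
    unfold gap
    congr 1
    ext x
    simp only [ContinuousLinearMap.sub_apply, ContinuousLinearMap.comp_apply]
    rw [hPW x, map_add]
    have hTx : projCLM V (projCLM T x) = projCLM T x :=
      projCLM_eq_self V (hTV (projCLM_mem T x))
    rw [hTx]
    abel
  -- claim 5 : gap U V = gap U S
  have h5 : gap U V = gap U S := by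
    unfold gap
    congr 1
    ext x
    simp only [ContinuousLinearMap.sub_apply, ContinuousLinearMap.comp_apply]
    have key : projCLM S (projCLM U x) = projCLM V (projCLM U x) := by
      apply Submodule.eq_starProjection_of_mem_orthogonal
      · exact Submodule.mem_map_of_mem (projCLM_mem U x)
      · exact (Submodule.orthogonal_le hSV) (sub_projCLM_mem_orthogonal V _)
    rw [key]
  exact ⟨h1, h2, h3, h4, h5⟩

end
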